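/- Let L ⊇ F_q be a field, σ the q-Frobenius on L extended coefficient-wise to L[t], and let K be a finite-dimensional L[t]-module (finite torsion module over L[t]) equipped with an L[t]-semilinear-induced map τ: σ*K → K (an L[t]-linear map from the Frobenius twist). Set K^ét := ⋂_{n≥1} image(τ^n). Then τ restricts to an isomorphism σ*(K^ét) → K^ét, and the induced map on the quotient K/K^ét is nilpotent. -/

import Mathlib

open Polynomial Submodule Set Function Module


/-- étale/nilpotent filtration of a finite torsion `L[t]`-module `K`
with a Frobenius-semilinear map `τ` (i.e. an `L[t]`-linear map `σ*K → K`).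
Setting `K^ét := ⋂_{n ≥ 1} im(τ^n)` (the `L[t]`-span of the function-image of the
`n`-th twisted iterate), `τ` restricts to an isomorphism `σ*(K^ét) → K^ét`
(surjectivity: the span of `τ(K^ét)` is `K^ét`; injectivity of the map from the
twist: `τ` preserves `L`-linear independence of families in `K^ét`),
and the induced map on `K/K^ét` is nilpotent. -/
theorem stmt1 {q : ℕ} (hq : 1 < q) {L : Type} [Field L]
    (frob : L →+* L) (hfrob : ∀ x : L, frob x = x ^ q)
    {K : Type} [AddCommGroup K] [Module (Polynomial L) K]
    [Module L K] [IsScalarTower L (Polynomial L) K] [FiniteDimensional L K]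
    (τ : K → K)
    (hadd : ∀ x y, τ (x + y) = τ x + τ y)
    (hsl : ∀ (p : Polynomial L) (x : K), τ (p • x) = (p.map frob) • τ x) :
    (Submodule.span (Polynomial L)
        (τ '' ((⨅ n : ℕ, Submodule.span (Polynomial L) (Set.range τ^[n + 1])) : Set K))
      = ⨅ n : ℕ, Submodule.span (Polynomial L) (Set.range τ^[n + 1])) ∧
    (∀ (s : Finset K),
      (s : Set K) ⊆ (⨅ n : ℕ, Submodule.span (Polynomial L) (Set.range τ^[n + 1]) : Set K) →
      LinearIndependent L (fun x : s => (x : K)) →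
      LinearIndependent L (fun x : s => τ (x : K))) ∧
    (∃ n : ℕ, ∀ x : K,
      τ^[n] x ∈ (⨅ m : ℕ, Submodule.span (Polynomial L) (Set.range τ^[m + 1]))) := by
  classical
  set R := Polynomial L with hR
  have hzero : τ 0 = 0 := by
    have h := hadd 0 0
    rw [add_zero] at h
    exact (left_eq_add.mp h)
  have hslL : ∀ (a : L) (x : K), τ (a • x) = frob a • τ x := by
    intro a x
    have h1 : a • x = (C a : R) • x := by
      rw [← Polynomial.algebraMap_eq]
      exact (algebraMap_smul R a x).symm
    have h2 : frob a • τ x = (C (frob a) : R) • τ x := by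
      rw [← Polynomial.algebraMap_eq]
      exact (algebraMap_smul R (frob a) (τ x)).symm
    rw [h1, hsl, Polynomial.map_C, h2]
  -- τ maps span into span of image
  have hspan : ∀ (T : Set K), ∀ x ∈ span R T, τ x ∈ span R (τ '' T) := by
    intro T x hx
    induction hx using Submodule.span_induction with
    | mem y hy => exact subset_span ⟨y, hy, rfl⟩
    | zero => rw [hzero]; exact zero_mem _
    | add y z _ _ hy hz => rw [hadd]; exact add_mem hy hz
    | smul p y _ hy => rw [hsl]; exact Submodule.smul_mem _ _ hy
  have hspanL : ∀ (T : Set K), ∀ x ∈ span L T, τ x ∈ span L (τ '' T) := by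
    intro T x hx
    induction hx using Submodule.span_induction with
    | mem y hy => exact subset_span ⟨y, hy, rfl⟩
    | zero => rw [hzero]; exact zero_mem _
    | add y z _ _ hy hz => rw [hadd]; exact add_mem hy hz
    | smul a y _ hy => rw [hslL]; exact Submodule.smul_mem _ _ hy
  have hspanspan : ∀ (T : Set K),
      span R (τ '' (span R T : Set K)) = span R (τ '' T) := by
    intro T
    refine le_antisymm (span_le.2 ?_) (span_mono (Set.image_mono subset_span))
    rintro _ ⟨y, hy, rfl⟩
    exact hspan T y hy
  set S : ℕ → Submodule R K := fun n => span R (Set.range τ^[n + 1]) with hS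
  have hSsucc : ∀ n, S (n + 1) ≤ S n := by
    intro n
    apply span_le.2
    rintro _ ⟨x, rfl⟩
    rw [Function.iterate_succ_apply]
    exact subset_span ⟨τ x, rfl⟩
  have hSanti : Antitone S := antitone_nat_of_succ_le hSsucc
  set f : ℕ → ℕ := fun n => finrank L ((S n).restrictScalars L) with hf
  have hfanti : ∀ {m n : ℕ}, m ≤ n → f n ≤ f m := by
    intro m n h
    exact Submodule.finrank_mono (fun x hx => hSanti h hx)
  obtain ⟨N, hNmem⟩ : ∃ N, f N = sInf (Set.range f) :=
    Nat.sInf_mem (Set.range_nonempty f)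
  have hNmin : ∀ n, f N ≤ f n := by
    intro n
    rw [hNmem]
    exact Nat.sInf_le ⟨n, rfl⟩
  have hstab : ∀ n, N ≤ n → S n = S N := by
    intro n hn
    have hle : (S n).restrictScalars L ≤ (S N).restrictScalars L :=
      fun x hx => hSanti hn hx
    have heq : (S n).restrictScalars L = (S N).restrictScalars L :=
      Submodule.eq_of_le_of_finrank_le hle (hNmin n)
    exact Submodule.restrictScalars_injective L R K heq
  have hE : (⨅ n : ℕ, S n) = S N := by
    refine le_antisymm (iInf_le _ N) (le_iInf fun n => ?_)
    rcases le_total n N with h | h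
    · exact hSanti h
    · exact (hstab n h).ge
  have hcoe : (⨅ n : ℕ, ((S n : Set K))) = ((⨅ n : ℕ, S n : Submodule R K) : Set K) := by
    rw [Submodule.coe_iInf, Set.iInf_eq_iInter]
  -- image of iterate
  have himg : ∀ n : ℕ, τ '' Set.range τ^[n + 1] = Set.range τ^[n + 2] := by
    intro n
    rw [← Set.range_comp, ← Function.iterate_succ']
  -- Part 1
  have part1 : span R (τ '' (⨅ n : ℕ, ((S n : Set K)))) = ⨅ n : ℕ, S n := by
    rw [hcoe, hE]
    have : span R (τ '' (S N : Set K)) = S (N + 1) := by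
      rw [hS]
      simp only []
      rw [hspanspan, himg]
    rw [this, hstab (N + 1) (Nat.le_succ N)]
  refine ⟨part1, ?_, ?_⟩
  · -- Part 2
    intro s hsub hsind
    rw [hcoe] at hsub
    set E : Submodule R K := ⨅ n : ℕ, S n with hEdef
    have part1' : span R (τ '' (E : Set K)) = E := by
      rw [hEdef, ← hcoe]; exact part1
    have hτE : ∀ x ∈ E, τ x ∈ E := by
      intro x hx
      rw [← part1']
      exact subset_span ⟨x, hx, rfl⟩
    set V : Submodule L K := span L (τ '' (E : Set K)) with hV
    -- V is stable under X •
    have hXV : ∀ x ∈ V, (X : R) • x ∈ V := by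
      intro x hx
      induction hx using Submodule.span_induction with
      | mem y hy =>
        obtain ⟨z, hz, rfl⟩ := hy
        have : (X : R) • τ z = τ ((X : R) • z) := by
          rw [hsl]; congr 1; simp
        rw [this]
        exact subset_span ⟨(X : R) • z, Submodule.smul_mem _ _ hz, rfl⟩
      | zero => rw [smul_zero]; exact zero_mem _
      | add y z _ _ hy hz => rw [smul_add]; exact add_mem hy hz
      | smul a y _ hy =>
        have : (X : R) • (a • y) = a • ((X : R) • y) := smul_comm _ _ _
        rw [this]
        exact Submodule.smul_mem _ _ hy
    have hXnV : ∀ (n : ℕ), ∀ x ∈ V, ((X : R) ^ n) • x ∈ V := by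
      intro n
      induction n with
      | zero => intro x hx; simpa using hx
      | succ n ih =>
        intro x hx
        have : ((X : R) ^ (n + 1)) • x = ((X : R) ^ n) • ((X : R) • x) := by
          rw [← mul_smul, pow_succ, mul_comm]
        rw [this]
        exact ih _ (hXV x hx)
    have hPV : ∀ (p : R) (x : K), x ∈ V → p • x ∈ V := by
      intro p
      induction p using Polynomial.induction_on' with
      | add p q hp hq =>
        intro x hx
        rw [add_smul]
        exact add_mem (hp x hx) (hq x hx)
      | monomial n a =>
        intro x hx
        have : (Polynomial.monomial n a : R) • x = a • (((X : R) ^ n) • x) := by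
          rw [← Polynomial.C_mul_X_pow_eq_monomial, mul_smul]
          rw [← Polynomial.algebraMap_eq, algebraMap_smul]
        rw [this]
        exact Submodule.smul_mem _ _ (hXnV n x hx)
    set V' : Submodule R K :=
      { carrier := (V : Set K)
        add_mem' := fun ha hb => add_mem ha hb
        zero_mem' := zero_mem V
        smul_mem' := fun p x hx => hPV p x hx } with hV'
    have hEV : (E : Set K) ⊆ (V : Set K) := by
      have h1 : span R (τ '' (E : Set K)) ≤ V' :=
        span_le.2 (fun y hy => subset_span hy)
      rw [part1'] at h1
      exact fun x hx => h1 hx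
    have hVE : (V : Set K) ⊆ (E : Set K) := by
      rw [hV]
      have : span L (τ '' (E : Set K)) ≤ E.restrictScalars L :=
        span_le.2 (fun y hy => by
          obtain ⟨z, hz, rfl⟩ := hy
          exact hτE z hz)
      exact fun x hx => this hx
    have hVeq : V = E.restrictScalars L :=
      le_antisymm (fun x hx => hVE hx) (fun x hx => hEV hx)
    -- extend s to a basis of E over L
    have hsub' : (s : Set K) ⊆ (E : Set K) := hsub
    have hsind' : LinearIndepOn L id (s : Set K) := hsind
    set b : Set K := hsind'.extend hsub' with hb
    have hbsub : b ⊆ (E : Set K) := hsind'.extend_subset hsub'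
    have hsb : (s : Set K) ⊆ b := hsind'.subset_extend hsub'
    have hspanb : (E : Set K) ⊆ span L b := hsind'.subset_span_extend hsub'
    have hbind : LinearIndependent L (fun x : b => (x : K)) :=
      hsind'.linearIndepOn_extend hsub'
    have hbfin : b.Finite := hbind.setFinite
    haveI : Fintype b := hbfin.fintype
    have hspanbeq : span L b = E.restrictScalars L := by
      refine le_antisymm (span_le.2 hbsub) ?_
      exact fun x hx => hspanb hx
    -- span of τ '' b equals E
    have hτb : span L (τ '' b) = E.restrictScalars L := by
      refine le_antisymm (span_le.2 ?_) ?_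
      · rintro _ ⟨y, hy, rfl⟩
        exact hτE y (hbsub hy)
      · rw [← hVeq, hV]
        apply span_le.2
        rintro _ ⟨y, hy, rfl⟩
        have : y ∈ span L b := hspanb hy
        exact hspanL b y this
    -- counting
    have hcard : Fintype.card b = finrank L (E.restrictScalars L) := by
      rw [← hspanbeq, finrank_span_set_eq_card hbind, Set.toFinset_card]
    have hτbind : LinearIndependent L (fun x : b => τ (x : K)) := by
      rw [linearIndependent_iff_card_eq_finrank_span]
      have hrange : Set.range (fun x : b => τ (x : K)) = τ '' b := by
        ext y
        simp [Set.range, Set.image]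
      rw [Set.finrank, hrange, hτb, hcard]
    -- restrict to s
    have hinj : Function.Injective (fun x : ((s : Set K)) => (⟨x, hsb x.2⟩ : b)) := by
      intro x y h
      rw [Subtype.ext_iff] at h ⊢
      exact h
    have := hτbind.comp _ hinj
    exact this
  · -- Part 3
    refine ⟨N + 1, fun x => ?_⟩
    rw [hE]
    exact subset_span ⟨x, rfl⟩
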